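/- If T is a strong Frobenius monad on a monoidal dagger category C, then the counit of the monoids/strong-monads adjunction, with components ε_A = T(ρ_A) ∘ st_{A,I} : A ⊗ T(I) → T(A), is a morphism of comonads from − ⊗ T(I) to T: it preserves the counit, i.e. η_A† ∘ ε_A = ρ_A ∘ (id_A ⊗ η_I†), and preserves the comultiplication, where − ⊗ T(I) carries the comonad structure induced by the comonoid (T(I), m†, η_I†) (m being the monoid multiplication μ_I ∘ T(ρ_{T(I)}) ∘ st_{T(I),I} on T(I)) and T carries the comonad structure (μ†, η†). -/

import Mathlib

open CategoryTheory Category MonoidalCategory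

universe v u

/-- A dagger structure on a category: a contravariant, identity-on-objects,
involutive operation on morphisms. -/
class DaggerStruct (C : Type u) [Category.{v} C] where
  dag : ∀ {X Y : C}, (X ⟶ Y) → (Y ⟶ X)
  dag_dag : ∀ {X Y : C} (f : X ⟶ Y), dag (dag f) = f
  dag_id : ∀ X : C, dag (𝟙 X) = 𝟙 X
  dag_comp : ∀ {X Y Z : C} (f : X ⟶ Y) (g : Y ⟶ Z), dag (f ≫ g) = dag g ≫ dag f

notation:max f "†" => DaggerStruct.dag f

/-- A monoidal dagger category: the dagger cooperates with the monoidal structure. -/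
class MonoidalDagger (C : Type u) [Category.{v} C] [MonoidalCategory C] extends
    DaggerStruct C where
  dag_tensor : ∀ {X₁ Y₁ X₂ Y₂ : C} (f : X₁ ⟶ Y₁) (g : X₂ ⟶ Y₂), (f ⊗ₘ g)† = f† ⊗ₘ g†
  assoc_unitary : ∀ X Y Z : C, ((α_ X Y Z).hom)† = (α_ X Y Z).inv
  lunitor_unitary : ∀ X : C, ((λ_ X).hom)† = (λ_ X).inv
  runitor_unitary : ∀ X : C, ((ρ_ X).hom)† = (ρ_ X).inv

/-- A symmetric monoidal dagger category: additionally the symmetries are unitary. -/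
class SymmetricDagger (C : Type u) [Category.{v} C] [MonoidalCategory C]
    [SymmetricCategory C] extends MonoidalDagger C where
  braiding_unitary : ∀ X Y : C, ((β_ X Y).hom)† = (β_ X Y).inv

/-- A monoid object, given by explicit data. -/
structure IsMonoidObj {C : Type u} [Category.{v} C] [MonoidalCategory C] (A : C)
    (m : A ⊗ A ⟶ A) (u : 𝟙_ C ⟶ A) : Prop where
  mul_assoc : (m ⊗ₘ 𝟙 A) ≫ m = (α_ A A A).hom ≫ (𝟙 A ⊗ₘ m) ≫ m
  one_mul : (u ⊗ₘ 𝟙 A) ≫ m = (λ_ A).hom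
  mul_one : (𝟙 A ⊗ₘ u) ≫ m = (ρ_ A).hom

/-- A Frobenius monoid in a monoidal dagger category. -/
structure IsFrobeniusMonoid {C : Type u} [Category.{v} C] [MonoidalCategory C]
    [MonoidalDagger C] (A : C) (m : A ⊗ A ⟶ A) (u : 𝟙_ C ⟶ A) extends
    IsMonoidObj A m u : Prop where
  frobenius : (m† ⊗ₘ 𝟙 A) ≫ (α_ A A A).hom ≫ (𝟙 A ⊗ₘ m) =
    (𝟙 A ⊗ₘ m†) ≫ (α_ A A A).inv ≫ (m ⊗ₘ 𝟙 A)

/-- A Frobenius monad on a dagger category. -/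
structure IsFrobeniusMonad {C : Type u} [Category.{v} C] [DaggerStruct C]
    (T : Monad C) : Prop where
  map_dag : ∀ {X Y : C} (f : X ⟶ Y), T.map (f†) = (T.map f)†
  frobenius : ∀ A : C,
    ((T.μ.app (T.obj A))†) ≫ T.map (T.μ.app A) =
      T.map ((T.μ.app A)†) ≫ T.μ.app (T.obj A)

/-- A strong Frobenius monad on a monoidal dagger category: a Frobenius monad `T` that is
simultaneously a strong monad, with every strength map `st_{X,Y}` unitary. -/
structure IsStrongFrobeniusMonad {C : Type u} [Category.{v} C] [MonoidalCategory C]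
    [MonoidalDagger C] (T : Monad C)
    (st : ∀ X Y : C, X ⊗ T.obj Y ⟶ T.obj (X ⊗ Y)) : Prop where
  map_dag : ∀ {X Y : C} (f : X ⟶ Y), T.map (f†) = (T.map f)†
  frobenius : ∀ A : C,
    ((T.μ.app (T.obj A))†) ≫ T.map (T.μ.app A) =
      T.map ((T.μ.app A)†) ≫ T.μ.app (T.obj A)
  st_natural : ∀ {X X' Y Y' : C} (f : X ⟶ X') (g : Y ⟶ Y'),
    (f ⊗ₘ T.map g) ≫ st X' Y' = st X Y ≫ T.map (f ⊗ₘ g)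
  st_assoc : ∀ X Y Z : C,
    (α_ X Y (T.obj Z)).inv ≫ st (X ⊗ Y) Z =
      (𝟙 X ⊗ₘ st Y Z) ≫ st X (Y ⊗ Z) ≫ T.map (α_ X Y Z).inv
  st_lunit : ∀ A : C, st (𝟙_ C) A ≫ T.map (λ_ A).hom = (λ_ (T.obj A)).hom
  st_mu : ∀ X A : C,
    (𝟙 X ⊗ₘ T.μ.app A) ≫ st X A =
      st X (T.obj A) ≫ T.map (st X A) ≫ T.μ.app (X ⊗ A)
  st_eta : ∀ X A : C, (𝟙 X ⊗ₘ T.η.app A) ≫ st X A = T.η.app (X ⊗ A)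
  st_unitary₁ : ∀ X Y : C, st X Y ≫ ((st X Y)†) = 𝟙 (X ⊗ T.obj Y)
  st_unitary₂ : ∀ X Y : C, ((st X Y)†) ≫ st X Y = 𝟙 (T.obj (X ⊗ Y))

/-- The multiplication `μ_I ∘ T(ρ_{T(I)}) ∘ st_{T(I),I}` on `T(I)` for a strong monad. -/
def tMul {C : Type u} [Category.{v} C] [MonoidalCategory C] (T : Monad C)
    (st : ∀ X Y : C, X ⊗ T.obj Y ⟶ T.obj (X ⊗ Y)) :
    T.obj (𝟙_ C) ⊗ T.obj (𝟙_ C) ⟶ T.obj (𝟙_ C) :=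
  st (T.obj (𝟙_ C)) (𝟙_ C) ≫ T.map (ρ_ (T.obj (𝟙_ C))).hom ≫ T.μ.app (𝟙_ C)

/-- The counit of the monoids/strong-monads adjunction,
`ε_A = T(ρ_A) ∘ st_{A,I} : A ⊗ T(I) ⟶ T(A)`. -/
def adjCounit {C : Type u} [Category.{v} C] [MonoidalCategory C] (T : Monad C)
    (st : ∀ X Y : C, X ⊗ T.obj Y ⟶ T.obj (X ⊗ Y)) (A : C) :
    A ⊗ T.obj (𝟙_ C) ⟶ T.obj A :=
  st A (𝟙_ C) ≫ T.map (ρ_ A).hom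


section AuxProof

variable {C : Type u} [Category.{v} C] [MonoidalCategory C] [MonoidalDagger C]

private lemma aux_runit_nat {X Y : C} (f : X ⟶ Y) :
    (f ⊗ₘ 𝟙 (𝟙_ C)) ≫ (ρ_ Y).hom = (ρ_ X).hom ≫ f := by
  rw [tensorHom_id]; exact rightUnitor_naturality f

private lemma aux_coh (X Y : C) :
    (α_ X Y (𝟙_ C)).hom ≫ (𝟙 X ⊗ₘ (ρ_ Y).hom) = (ρ_ (X ⊗ Y)).hom := by
  rw [rightUnitor_tensor_hom, id_tensorHom]

private lemma aux_eta_dag_nat (T : Monad C)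
    (st : ∀ X Y : C, X ⊗ T.obj Y ⟶ T.obj (X ⊗ Y))
    (hT : IsStrongFrobeniusMonad T st) {X Y : C} (g : X ⟶ Y) :
    T.map g ≫ ((T.η.app Y)†) = ((T.η.app X)†) ≫ g := by
  have h : (g†) ≫ T.η.app X = T.η.app Y ≫ T.map (g†) := by
    simpa using T.η.naturality (g†)
  have h2 := congrArg DaggerStruct.dag h
  rw [DaggerStruct.dag_comp, DaggerStruct.dag_comp, DaggerStruct.dag_dag,
    ← hT.map_dag, DaggerStruct.dag_dag] at h2
  exact h2.symm

private lemma aux_st_eta_dag (T : Monad C)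
    (st : ∀ X Y : C, X ⊗ T.obj Y ⟶ T.obj (X ⊗ Y))
    (hT : IsStrongFrobeniusMonad T st) (X A : C) :
    st X A ≫ ((T.η.app (X ⊗ A))†) = 𝟙 X ⊗ₘ ((T.η.app A)†) := by
  have h := congrArg DaggerStruct.dag (hT.st_eta X A)
  rw [DaggerStruct.dag_comp, MonoidalDagger.dag_tensor, DaggerStruct.dag_id] at h
  calc st X A ≫ ((T.η.app (X ⊗ A))†)
      = st X A ≫ ((st X A)†) ≫ (𝟙 X ⊗ₘ ((T.η.app A)†)) := by rw [h]
    _ = (st X A ≫ ((st X A)†)) ≫ (𝟙 X ⊗ₘ ((T.η.app A)†)) := by rw [Category.assoc]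
    _ = 𝟙 X ⊗ₘ ((T.η.app A)†) := by rw [hT.st_unitary₁, Category.id_comp]

private lemma aux_part1 (T : Monad C)
    (st : ∀ X Y : C, X ⊗ T.obj Y ⟶ T.obj (X ⊗ Y))
    (hT : IsStrongFrobeniusMonad T st) (A : C) :
    adjCounit T st A ≫ ((T.η.app A)†) =
      (𝟙 A ⊗ₘ ((T.η.app (𝟙_ C))†)) ≫ (ρ_ A).hom := by
  show (st A (𝟙_ C) ≫ T.map (ρ_ A).hom) ≫ ((T.η.app A)†) = _
  rw [Category.assoc, aux_eta_dag_nat T st hT ((ρ_ A).hom), ← Category.assoc,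
    aux_st_eta_dag T st hT A (𝟙_ C)]

private lemma aux_st_assoc' (T : Monad C)
    (st : ∀ X Y : C, X ⊗ T.obj Y ⟶ T.obj (X ⊗ Y))
    (hT : IsStrongFrobeniusMonad T st) (X Y Z : C) :
    (𝟙 X ⊗ₘ st Y Z) ≫ st X (Y ⊗ Z) =
      (α_ X Y (T.obj Z)).inv ≫ st (X ⊗ Y) Z ≫ T.map (α_ X Y Z).hom := by
  have h : ((α_ X Y (T.obj Z)).inv ≫ st (X ⊗ Y) Z) ≫ T.map (α_ X Y Z).hom =
      ((𝟙 X ⊗ₘ st Y Z) ≫ st X (Y ⊗ Z) ≫ T.map (α_ X Y Z).inv) ≫ T.map (α_ X Y Z).hom := by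
    rw [hT.st_assoc]
  simpa [← CategoryTheory.Functor.map_comp] using h.symm

private lemma aux_star (T : Monad C)
    (st : ∀ X Y : C, X ⊗ T.obj Y ⟶ T.obj (X ⊗ Y))
    (hT : IsStrongFrobeniusMonad T st) (A : C) :
    (adjCounit T st A ⊗ₘ 𝟙 (T.obj (𝟙_ C))) ≫ adjCounit T st (T.obj A) ≫ T.μ.app A =
      (α_ A (T.obj (𝟙_ C)) (T.obj (𝟙_ C))).hom ≫ (𝟙 A ⊗ₘ tMul T st) ≫ adjCounit T st A := by
  have hmu : T.map (T.map (ρ_ A).hom) ≫ T.μ.app A =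
      T.μ.app (A ⊗ 𝟙_ C) ≫ T.map (ρ_ A).hom := by
    simpa using T.μ.naturality (ρ_ A).hom
  have h1 := hT.st_natural (T.map (ρ_ A).hom) (𝟙 (𝟙_ C))
  have h2 := hT.st_natural (st A (𝟙_ C)) (𝟙 (𝟙_ C))
  simp only [CategoryTheory.Functor.map_id] at h1 h2
  have h3 : T.map (T.map (ρ_ A).hom ⊗ₘ 𝟙 (𝟙_ C)) ≫ T.map (ρ_ (T.obj A)).hom =
      T.map (ρ_ (T.obj (A ⊗ 𝟙_ C))).hom ≫ T.map (T.map (ρ_ A).hom) := by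
    rw [← CategoryTheory.Functor.map_comp, ← CategoryTheory.Functor.map_comp, aux_runit_nat]
  have h4 : T.map (st A (𝟙_ C) ⊗ₘ 𝟙 (𝟙_ C)) ≫ T.map (ρ_ (T.obj (A ⊗ 𝟙_ C))).hom =
      T.map (ρ_ (A ⊗ T.obj (𝟙_ C))).hom ≫ T.map (st A (𝟙_ C)) := by
    rw [← CategoryTheory.Functor.map_comp, ← CategoryTheory.Functor.map_comp, aux_runit_nat]
  have h5 := hT.st_natural (𝟙 A) ((ρ_ (T.obj (𝟙_ C))).hom)
  have h6 : T.map (α_ A (T.obj (𝟙_ C)) (𝟙_ C)).hom ≫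
      T.map (𝟙 A ⊗ₘ (ρ_ (T.obj (𝟙_ C))).hom) = T.map (ρ_ (A ⊗ T.obj (𝟙_ C))).hom := by
    rw [← CategoryTheory.Functor.map_comp, aux_coh]
  unfold adjCounit tMul
  simp only [comp_tensor_id, id_tensor_comp, Category.assoc]
  rw [reassoc_of% h1, reassoc_of% h2, reassoc_of% h3, hmu, reassoc_of% h4,
    reassoc_of% (hT.st_mu A (𝟙_ C)), reassoc_of% h5,
    reassoc_of% (aux_st_assoc' T st hT A (T.obj (𝟙_ C)) (𝟙_ C)),
    Iso.hom_inv_id_assoc, reassoc_of% h6]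

private lemma aux_counit_dag (T : Monad C)
    (st : ∀ X Y : C, X ⊗ T.obj Y ⟶ T.obj (X ⊗ Y))
    (hT : IsStrongFrobeniusMonad T st) (A : C) :
    (adjCounit T st A)† = T.map (ρ_ A).inv ≫ ((st A (𝟙_ C))†) := by
  show (st A (𝟙_ C) ≫ T.map (ρ_ A).hom)† = _
  rw [DaggerStruct.dag_comp, ← hT.map_dag, MonoidalDagger.runitor_unitary]

private lemma aux_counit_unitary₁ (T : Monad C)
    (st : ∀ X Y : C, X ⊗ T.obj Y ⟶ T.obj (X ⊗ Y))
    (hT : IsStrongFrobeniusMonad T st) (A : C) :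
    adjCounit T st A ≫ ((adjCounit T st A)†) = 𝟙 (A ⊗ T.obj (𝟙_ C)) := by
  rw [aux_counit_dag T st hT]
  show (st A (𝟙_ C) ≫ T.map (ρ_ A).hom) ≫ T.map (ρ_ A).inv ≫ ((st A (𝟙_ C))†) = _
  rw [Category.assoc, ← Category.assoc (T.map (ρ_ A).hom), ← CategoryTheory.Functor.map_comp,
    Iso.hom_inv_id, CategoryTheory.Functor.map_id, Category.id_comp, hT.st_unitary₁]

private lemma aux_counit_unitary₂ (T : Monad C)
    (st : ∀ X Y : C, X ⊗ T.obj Y ⟶ T.obj (X ⊗ Y))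
    (hT : IsStrongFrobeniusMonad T st) (A : C) :
    ((adjCounit T st A)†) ≫ adjCounit T st A = 𝟙 (T.obj A) := by
  rw [aux_counit_dag T st hT]
  show (T.map (ρ_ A).inv ≫ ((st A (𝟙_ C))†)) ≫ (st A (𝟙_ C) ≫ T.map (ρ_ A).hom) = _
  rw [Category.assoc, ← Category.assoc ((st A (𝟙_ C))†), hT.st_unitary₂,
    Category.id_comp, ← CategoryTheory.Functor.map_comp, Iso.inv_hom_id, CategoryTheory.Functor.map_id]

end AuxProof

/-- STATEMENT 18: for a strong Frobenius monad `T`, the counit `ε_A = T(ρ_A) ∘ st_{A,I}`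
is a morphism of comonads from `− ⊗ T(I)` (with the comonad structure induced by the
comonoid `(T(I), m†, η_I†)`) to `T` (with comonad structure `(μ†, η†)`): it preserves
the counit and the comultiplication. -/
theorem adj_counit_comonad_morphism {C : Type u} [Category.{v} C] [MonoidalCategory C]
    [MonoidalDagger C] (T : Monad C) (st : ∀ X Y : C, X ⊗ T.obj Y ⟶ T.obj (X ⊗ Y))
    (hT : IsStrongFrobeniusMonad T st) :
    (∀ A : C,
      adjCounit T st A ≫ ((T.η.app A)†) =
        (𝟙 A ⊗ₘ ((T.η.app (𝟙_ C))†)) ≫ (ρ_ A).hom) ∧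
    (∀ A : C,
      adjCounit T st A ≫ ((T.μ.app A)†) =
        (𝟙 A ⊗ₘ ((tMul T st)†)) ≫ (α_ A (T.obj (𝟙_ C)) (T.obj (𝟙_ C))).inv ≫
          (adjCounit T st A ⊗ₘ 𝟙 (T.obj (𝟙_ C))) ≫ adjCounit T st (T.obj A)) := by
  constructor
  · intro A
    exact aux_part1 T st hT A
  · intro A
    have hd := congrArg DaggerStruct.dag (aux_star T st hT A)
    simp only [DaggerStruct.dag_comp, MonoidalDagger.dag_tensor, DaggerStruct.dag_id,
      MonoidalDagger.assoc_unitary, Category.assoc] at hd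
    have hcomb : (((adjCounit T st A)†) ⊗ₘ 𝟙 (T.obj (𝟙_ C))) ≫
        (adjCounit T st A ⊗ₘ 𝟙 (T.obj (𝟙_ C))) = 𝟙 _ := by
      rw [tensorHom_comp_tensorHom, aux_counit_unitary₂ T st hT A, Category.comp_id, id_tensorHom_id]
    have h2 : adjCounit T st A ≫ ((T.μ.app A)†) =
        adjCounit T st A ≫ ((T.μ.app A)†) ≫ ((adjCounit T st (T.obj A))†) ≫
          (((adjCounit T st A)†) ⊗ₘ 𝟙 (T.obj (𝟙_ C))) ≫
          (adjCounit T st A ⊗ₘ 𝟙 (T.obj (𝟙_ C))) ≫ adjCounit T st (T.obj A) := by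
      rw [reassoc_of% hcomb, aux_counit_unitary₂ T st hT (T.obj A)]
      simp
    rw [h2, reassoc_of% hd, reassoc_of% (aux_counit_unitary₁ T st hT A)]
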